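/- Assume that for every skew-symmetrizable initial matrix the sign-coherence property holds (every C-matrix of every pattern is column sign-coherent). Let B¹ = μ_k(B⁰) and let w be a path from t₀ to a vertex t, so that the path from the adjacent initial vertex t₁ to t is k·w (w with k prepended). Then the dual mutation formulas hold: C_t[B¹, k·w] = (J_k + [−ε B⁰]₊^{k•}) C_t[B⁰, w] and G_t[B¹, k·w] = (J_k + [ε B⁰]₊^{•k}) G_t[B⁰, w], where ε ∈ {1,−1} is the common sign of the nonzero entries of the k-th row of G_t[B⁰, w] (well-defined because G_t[B⁰, w] is row sign-coherent). -/

import Mathlib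

open Matrix

namespace ClusterPattern

variable {ι : Type*} [Fintype ι] [DecidableEq ι]

/-- Entrywise positive part `[A]₊`. -/
def posPart (A : Matrix ι ι ℤ) : Matrix ι ι ℤ := Matrix.of fun i j => max (A i j) 0

/-- `A^{•k}`: all columns other than the `k`-th set to `0`. -/
def colSel (k : ι) (A : Matrix ι ι ℤ) : Matrix ι ι ℤ :=
  Matrix.of fun i j => if j = k then A i j else 0

/-- `A^{k•}`: all rows other than the `k`-th set to `0`. -/
def rowSel (k : ι) (A : Matrix ι ι ℤ) : Matrix ι ι ℤ :=
  Matrix.of fun i j => if i = k then A i j else 0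

/-- `J_k`: identity with `k`-th diagonal entry replaced by `-1`. -/
def Jmat (k : ι) : Matrix ι ι ℤ := Matrix.diagonal fun i => if i = k then -1 else 1

/-- A skew-symmetrizable integer matrix. -/
def IsSkewSymmetrizable (B : Matrix ι ι ℤ) : Prop :=
  ∃ D : ι → ℚ, (∀ i, 0 < D i) ∧ ∀ i j, D i * (B i j : ℚ) = -(D j * (B j i : ℚ))

/-- Matrix mutation `μ_k`. -/
def mutate (k : ι) (B : Matrix ι ι ℤ) : Matrix ι ι ℤ :=
  Matrix.of fun i j => if i = k ∨ j = k then -B i j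
    else B i j + B i k * max (B k j) 0 + max (-B i k) 0 * B k j

/-- The exchange matrix `B_t` at the vertex reached from `B0` along the path `w`. -/
def Bmat (B0 : Matrix ι ι ℤ) (w : List ι) : Matrix ι ι ℤ :=
  w.foldl (fun B k => mutate k B) B0

/-- One mutation step of a `C`-matrix. -/
def Cstep (B C : Matrix ι ι ℤ) (k : ι) : Matrix ι ι ℤ :=
  C * Jmat k + C * rowSel k (posPart B) + colSel k (posPart (-C)) * B

/-- One mutation step of a `G`-matrix. -/
def Gstep (B0 B C G : Matrix ι ι ℤ) (k : ι) : Matrix ι ι ℤ :=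
  G * Jmat k + G * colSel k (posPart (-B)) - B0 * colSel k (posPart (-C))

/-- The `C`-matrix `C_t` at the vertex reached from the initial matrix `B0` along `w`. -/
def Cmat (B0 : Matrix ι ι ℤ) (w : List ι) : Matrix ι ι ℤ :=
  (w.foldl (fun p k => (mutate k p.1, Cstep p.1 p.2 k))
    ((B0, 1) : Matrix ι ι ℤ × Matrix ι ι ℤ)).2

/-- The `G`-matrix `G_t` at the vertex reached from the initial matrix `B0` along `w`. -/
def Gmat (B0 : Matrix ι ι ℤ) (w : List ι) : Matrix ι ι ℤ :=
  (w.foldl (fun p k => (mutate k p.1, Cstep p.1 p.2.1 k, Gstep B0 p.1 p.2.1 p.2.2 k))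
    ((B0, 1, 1) : Matrix ι ι ℤ × Matrix ι ι ℤ × Matrix ι ι ℤ)).2.2

/-- A nonzero integer vector with all entries nonnegative. -/
def IsPositiveVec (v : ι → ℤ) : Prop := v ≠ 0 ∧ ∀ i, 0 ≤ v i

/-- A nonzero integer vector with all entries nonpositive. -/
def IsNegativeVec (v : ι → ℤ) : Prop := v ≠ 0 ∧ ∀ i, v i ≤ 0

/-- Every column is a positive or a negative vector. -/
def ColSignCoherent (M : Matrix ι ι ℤ) : Prop :=
  ∀ j, IsPositiveVec (fun i => M i j) ∨ IsNegativeVec (fun i => M i j)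

/-- Every row is a positive or a negative vector. -/
def RowSignCoherent (M : Matrix ι ι ℤ) : Prop :=
  ∀ i, IsPositiveVec (fun j => M i j) ∨ IsNegativeVec (fun j => M i j)

section Helpers
set_option linter.unusedSectionVars false

variable {ι : Type*} [Fintype ι] [DecidableEq ι]

lemma posPart_apply (A : Matrix ι ι ℤ) (i j : ι) : posPart A i j = max (A i j) 0 := rfl
lemma colSel_apply (k : ι) (A : Matrix ι ι ℤ) (i j : ι) :
    colSel k A i j = if j = k then A i j else 0 := rfl
lemma rowSel_apply (k : ι) (A : Matrix ι ι ℤ) (i j : ι) :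
    rowSel k A i j = if i = k then A i j else 0 := rfl
lemma Jmat_apply (k i j : ι) :
    Jmat k i j = if i = j then (if i = k then -1 else 1) else 0 := by
  simp [Jmat, Matrix.diagonal_apply]

lemma max_sub_max_neg (a : ℤ) : max a 0 - max (-a) 0 = a := by
  rcases le_total a 0 with h | h
  · rw [max_eq_right h, max_eq_left (by linarith)]; ring
  · rw [max_eq_left h, max_eq_right (by linarith)]; ring

lemma posPart_sub_posPart_neg (A : Matrix ι ι ℤ) : posPart A - posPart (-A) = A := by
  ext i j
  simp [posPart, max_sub_max_neg]

lemma mul_Jmat_apply (X : Matrix ι ι ℤ) (l i j : ι) :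
    (X * Jmat l) i j = if j = l then -X i j else X i j := by
  rw [Jmat, Matrix.mul_diagonal]
  split <;> ring

lemma Jmat_mul_apply (X : Matrix ι ι ℤ) (l i j : ι) :
    (Jmat l * X) i j = if i = l then -X i j else X i j := by
  rw [Jmat, Matrix.diagonal_mul]
  split <;> ring

lemma mul_rowSel_apply (X A : Matrix ι ι ℤ) (l i j : ι) :
    (X * rowSel l A) i j = X i l * A l j := by
  rw [Matrix.mul_apply]
  rw [Finset.sum_eq_single l]
  · simp [rowSel]
  · intro m _ hm; simp [rowSel, hm]
  · intro h; exact absurd (Finset.mem_univ l) h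

lemma colSel_mul_apply (A X : Matrix ι ι ℤ) (l i j : ι) :
    (colSel l A * X) i j = A i l * X l j := by
  rw [Matrix.mul_apply]
  rw [Finset.sum_eq_single l]
  · simp [colSel]
  · intro m _ hm; simp [colSel, hm]
  · intro h; exact absurd (Finset.mem_univ l) h

lemma mul_colSel_apply (X A : Matrix ι ι ℤ) (l i j : ι) :
    (X * colSel l A) i j = if j = l then (X * A) i j else 0 := by
  rw [Matrix.mul_apply, Matrix.mul_apply]
  by_cases h : j = l
  · simp only [h, if_pos rfl]
    exact Finset.sum_congr rfl fun m _ => by simp [colSel]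
  · rw [if_neg h]
    exact Finset.sum_eq_zero fun m _ => by simp [colSel, h]

lemma rowSel_mul_apply (A X : Matrix ι ι ℤ) (l i j : ι) :
    (rowSel l A * X) i j = if i = l then (A * X) i j else 0 := by
  rw [Matrix.mul_apply, Matrix.mul_apply]
  by_cases h : i = l
  · simp only [h, if_pos rfl]
    exact Finset.sum_congr rfl fun m _ => by simp [rowSel]
  · rw [if_neg h]
    exact Finset.sum_eq_zero fun m _ => by simp [rowSel, h]

lemma colSel_mul (A X : Matrix ι ι ℤ) (l : ι) : colSel l A * X = A * rowSel l X := by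
  ext i j; rw [colSel_mul_apply, mul_rowSel_apply]

end Helpers
section Helpers2
set_option linter.unusedSectionVars false
variable {ι : Type*} [Fintype ι] [DecidableEq ι]

lemma mutate_apply (k : ι) (B : Matrix ι ι ℤ) (i j : ι) :
    mutate k B i j = if i = k ∨ j = k then -B i j
      else B i j + B i k * max (B k j) 0 + max (-B i k) 0 * B k j := rfl

lemma mutate_apply_left (k : ι) (B : Matrix ι ι ℤ) (j : ι) : mutate k B k j = -B k j := by
  rw [mutate_apply, if_pos (Or.inl rfl)]

lemma mutate_apply_right (k : ι) (B : Matrix ι ι ℤ) (i : ι) : mutate k B i k = -B i k := by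
  rw [mutate_apply, if_pos (Or.inr rfl)]

lemma mutate_apply_of_ne (k : ι) (B : Matrix ι ι ℤ) {i j : ι} (hi : i ≠ k) (hj : j ≠ k) :
    mutate k B i j = B i j + B i k * max (B k j) 0 + max (-B i k) 0 * B k j := by
  rw [mutate_apply, if_neg (by tauto)]

lemma mutate_mutate (k : ι) (B : Matrix ι ι ℤ) : mutate k (mutate k B) = B := by
  ext i j
  by_cases hi : i = k
  · subst hi; rw [mutate_apply_left, mutate_apply_left, neg_neg]
  · by_cases hj : j = k
    · subst hj; rw [mutate_apply_right, mutate_apply_right, neg_neg]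
    · rw [mutate_apply_of_ne k _ hi hj, mutate_apply_of_ne k B hi hj,
        mutate_apply_left, mutate_apply_right, neg_neg]
      linear_combination (B i k) * max_sub_max_neg (B k j) - (B k j) * max_sub_max_neg (B i k)

lemma mutate_transpose (k : ι) (B : Matrix ι ι ℤ) :
    (mutate k B)ᵀ = mutate k Bᵀ := by
  ext i j
  rw [Matrix.transpose_apply]
  by_cases hi : i = k
  · subst hi; rw [mutate_apply_right, mutate_apply_left, Matrix.transpose_apply]
  · by_cases hj : j = k
    · subst hj; rw [mutate_apply_left, mutate_apply_right, Matrix.transpose_apply]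
    · rw [mutate_apply_of_ne k _ hj hi, mutate_apply_of_ne k Bᵀ hi hj,
        Matrix.transpose_apply, Matrix.transpose_apply, Matrix.transpose_apply]
      linear_combination (B j k) * max_sub_max_neg (B k i) - (B k i) * max_sub_max_neg (B j k)

/-- Skew-symmetrizable matrices have zero diagonal. -/
lemma IsSkewSymmetrizable.diag_zero {B : Matrix ι ι ℤ} (h : IsSkewSymmetrizable B) (i : ι) :
    B i i = 0 := by
  obtain ⟨D, hD, hskew⟩ := h
  have h1 := hskew i i
  have hDi := (hD i).ne'
  have h2 : (B i i : ℚ) = 0 := by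
    rcases mul_eq_zero.mp (by linarith : D i * (B i i : ℚ) = 0) with h | h
    · exact absurd h hDi
    · exact h
  exact_mod_cast h2

lemma IsSkewSymmetrizable.mutate {B : Matrix ι ι ℤ} (h : IsSkewSymmetrizable B) (k : ι) :
    IsSkewSymmetrizable (mutate k B) := by
  obtain ⟨D, hD, hskew⟩ := h
  refine ⟨D, hD, fun i j => ?_⟩
  have key : ∀ a b : ι, D a * max (-(B a b) : ℚ) 0 = D b * max ((B b a) : ℚ) 0 := by
    intro a b
    rw [mul_max_of_nonneg _ _ (le_of_lt (hD a)), mul_max_of_nonneg _ _ (le_of_lt (hD b)),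
      mul_zero, mul_zero]
    congr 1
    have := hskew a b; linarith
  by_cases hi : i = k
  · subst hi
    rw [mutate_apply_left, mutate_apply_right]
    push_cast
    have := hskew i j; linarith
  · by_cases hj : j = k
    · subst hj
      rw [mutate_apply_right, mutate_apply_left]
      push_cast
      have := hskew i j; linarith
    · rw [mutate_apply_of_ne k B hi hj, mutate_apply_of_ne k B hj hi]
      push_cast [Int.cast_max]
      linear_combination hskew i j + (max ((B k j : ℚ)) 0) * hskew i k
        + ((B k i : ℚ)) * key j k + ((B k j : ℚ)) * key i k
        + (max ((B k i : ℚ)) 0) * hskew j k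

lemma IsSkewSymmetrizable.transpose {B : Matrix ι ι ℤ} (h : IsSkewSymmetrizable B) :
    IsSkewSymmetrizable Bᵀ := by
  obtain ⟨D, hD, hskew⟩ := h
  refine ⟨fun i => (D i)⁻¹, fun i => inv_pos.mpr (hD i), fun i j => ?_⟩
  rw [Matrix.transpose_apply, Matrix.transpose_apply]
  have h1 := hskew j i
  have hDi := (hD i).ne'
  have hDj := (hD j).ne'
  field_simp
  linarith

end Helpers2
section Helpers3
set_option linter.unusedSectionVars false
variable {ι : Type*} [Fintype ι] [DecidableEq ι]

lemma Bmat_nil (B : Matrix ι ι ℤ) : Bmat B [] = B := rfl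

lemma Bmat_cons (B : Matrix ι ι ℤ) (k : ι) (w : List ι) :
    Bmat B (k :: w) = Bmat (mutate k B) w := rfl

lemma Bmat_concat (B : Matrix ι ι ℤ) (w : List ι) (l : ι) :
    Bmat B (w ++ [l]) = mutate l (Bmat B w) := by
  rw [Bmat, List.foldl_append, List.foldl_cons, List.foldl_nil]; rfl

lemma Bmat_reverse (B : Matrix ι ι ℤ) (w : List ι) :
    Bmat (Bmat B w) w.reverse = B := by
  induction w using List.reverseRecOn with
  | nil => rfl
  | append_singleton u l ih =>
      rw [Bmat_concat, List.reverse_append, List.reverse_singleton, List.singleton_append,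
        Bmat_cons, mutate_mutate, ih]

lemma Bmat_transpose (B : Matrix ι ι ℤ) (w : List ι) :
    (Bmat B w)ᵀ = Bmat Bᵀ w := by
  induction w generalizing B with
  | nil => rfl
  | cons a w ih => rw [Bmat_cons, Bmat_cons, ih, mutate_transpose]

lemma IsSkewSymmetrizable.bmat {B : Matrix ι ι ℤ} (h : IsSkewSymmetrizable B) (w : List ι) :
    IsSkewSymmetrizable (Bmat B w) := by
  induction w generalizing B with
  | nil => exact h
  | cons a w ih => rw [Bmat_cons]; exact ih (h.mutate a)

lemma Cfold_fst (w : List ι) (B X : Matrix ι ι ℤ) :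
    (w.foldl (fun p k => (mutate k p.1, Cstep p.1 p.2 k)) (B, X)).1 = Bmat B w := by
  induction w generalizing B X with
  | nil => rfl
  | cons a w ih => rw [List.foldl_cons, Bmat_cons]; exact ih _ _

lemma Cmat_nil (B : Matrix ι ι ℤ) : Cmat B [] = 1 := rfl

lemma Cmat_concat (B : Matrix ι ι ℤ) (w : List ι) (l : ι) :
    Cmat B (w ++ [l]) = Cstep (Bmat B w) (Cmat B w) l := by
  rw [Cmat, List.foldl_append, List.foldl_cons, List.foldl_nil, Cmat]
  have h := Cfold_fst w B (1 : Matrix ι ι ℤ)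
  rw [h]

lemma Gfold_fst (B0 : Matrix ι ι ℤ) (w : List ι) (B X Y : Matrix ι ι ℤ) :
    (w.foldl (fun p k => (mutate k p.1, Cstep p.1 p.2.1 k, Gstep B0 p.1 p.2.1 p.2.2 k))
      (B, X, Y)).1 = Bmat B w := by
  induction w generalizing B X Y with
  | nil => rfl
  | cons a w ih => rw [List.foldl_cons, Bmat_cons]; exact ih _ _ _

lemma Gfold_snd_fst (B0 : Matrix ι ι ℤ) (w : List ι) (B X Y : Matrix ι ι ℤ) :
    (w.foldl (fun p k => (mutate k p.1, Cstep p.1 p.2.1 k, Gstep B0 p.1 p.2.1 p.2.2 k))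
      (B, X, Y)).2.1
    = (w.foldl (fun p k => (mutate k p.1, Cstep p.1 p.2 k)) (B, X)).2 := by
  induction w generalizing B X Y with
  | nil => rfl
  | cons a w ih => rw [List.foldl_cons, List.foldl_cons]; exact ih _ _ _

lemma Gmat_nil (B : Matrix ι ι ℤ) : Gmat B [] = 1 := rfl

lemma Gmat_concat (B : Matrix ι ι ℤ) (w : List ι) (l : ι) :
    Gmat B (w ++ [l]) = Gstep B (Bmat B w) (Cmat B w) (Gmat B w) l := by
  rw [Gmat, List.foldl_append, List.foldl_cons, List.foldl_nil, Gmat]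
  rw [Gfold_fst, Gfold_snd_fst, ← Cmat]

lemma Bmat_mutate_cons (B : Matrix ι ι ℤ) (k : ι) (w : List ι) :
    Bmat (mutate k B) (k :: w) = Bmat B w := by
  rw [Bmat_cons, mutate_mutate]

end Helpers3
section Helpers4
set_option linter.unusedSectionVars false
variable {ι : Type*} [Fintype ι] [DecidableEq ι]

lemma max_sub_self (a : ℤ) : max a 0 - a = max (-a) 0 := by linarith [max_sub_max_neg a]
lemma max_neg_add (a : ℤ) : max (-a) 0 + a = max a 0 := by linarith [max_sub_max_neg a]

lemma smul_posPart_apply (σ : ℤ) (B : Matrix ι ι ℤ) (i j : ι) :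
    posPart (σ • B) i j = max (σ * B i j) 0 := by
  rw [posPart_apply, Matrix.smul_apply, smul_eq_mul]

lemma Cstep_factor (B C : Matrix ι ι ℤ) (l : ι) (σ : ℤ)
    (hσ : σ = 1 ∨ σ = -1) (hcol : ∀ i, 0 ≤ σ * C i l) :
    Cstep B C l = C * (Jmat l + rowSel l (posPart (σ • B))) := by
  ext i j
  rw [Cstep, Matrix.mul_add, Matrix.add_apply, Matrix.add_apply, Matrix.add_apply,
    mul_rowSel_apply, mul_rowSel_apply, colSel_mul_apply, posPart_apply, posPart_apply,
    smul_posPart_apply, Matrix.neg_apply]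
  rcases hσ with h | h <;> subst h
  · have h0 : 0 ≤ C i l := by have := hcol i; linarith
    rw [max_eq_right (by linarith : -C i l ≤ 0)]
    ring_nf
  · have h0 : C i l ≤ 0 := by have := hcol i; linarith
    rw [max_eq_left (by linarith : 0 ≤ -C i l)]
    have := max_sub_self (B l j)
    have hh : (-1 : ℤ) * B l j = -B l j := by ring
    rw [hh]
    linear_combination (C i l) * max_sub_self (B l j)

lemma Gstep_factor (B0 B C G : Matrix ι ι ℤ) (l : ι) (σ : ℤ)
    (hσ : σ = 1 ∨ σ = -1) (hcol : ∀ i, 0 ≤ σ * C i l) (hH1 : G * B = B0 * C) :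
    Gstep B0 B C G l = G * (Jmat l + colSel l (posPart ((-σ) • B))) := by
  ext i j
  simp only [Gstep, Matrix.mul_add, Matrix.sub_apply, Matrix.add_apply, mul_colSel_apply]
  by_cases hj : j = l
  · rw [hj]
    rcases hσ with h | h <;> subst h
    · have hz : (B0 * posPart (-C)) i l = 0 := by
        rw [Matrix.mul_apply]
        refine Finset.sum_eq_zero fun m _ => ?_
        rw [posPart_apply, Matrix.neg_apply,
          max_eq_right (by have := hcol m; linarith : -C m l ≤ 0), mul_zero]
      rw [if_pos rfl, if_pos rfl, if_pos rfl, hz]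
      have : (-(1:ℤ)) • B = -B := by rw [neg_smul, one_smul]
      rw [this]
      ring
    · have hz : (B0 * posPart (-C)) i l = -(G * B) i l := by
        rw [hH1, Matrix.mul_apply, Matrix.mul_apply, ← Finset.sum_neg_distrib]
        refine Finset.sum_congr rfl fun m _ => ?_
        rw [posPart_apply, Matrix.neg_apply,
          max_eq_left (by have := hcol m; linarith : 0 ≤ -C m l)]
        ring
      rw [if_pos rfl, if_pos rfl, if_pos rfl, hz]
      have h1 : (-(-1:ℤ)) • B = B := by norm_num
      rw [h1]
      have h2 : (G * posPart (-B)) i l + (G * B) i l = (G * posPart B) i l := by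
        rw [Matrix.mul_apply, Matrix.mul_apply, Matrix.mul_apply, ← Finset.sum_add_distrib]
        refine Finset.sum_congr rfl fun m _ => ?_
        rw [posPart_apply, posPart_apply, Matrix.neg_apply]
        linear_combination G i m * max_neg_add (B m l)
      linarith
  · rw [if_neg hj, if_neg hj, if_neg hj]
    ring

lemma rowSel_mutate (B : Matrix ι ι ℤ) (l : ι) :
    rowSel l (mutate l B) = -rowSel l B := by
  ext i j
  rw [rowSel_apply, Matrix.neg_apply, rowSel_apply]
  by_cases h : i = l
  · subst h; rw [if_pos rfl, if_pos rfl, mutate_apply_left]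
  · rw [if_neg h, if_neg h]; ring

lemma colSel_mul_mutate (X B : Matrix ι ι ℤ) (l : ι) :
    colSel l X * mutate l B = -(colSel l X * B) := by
  rw [colSel_mul, colSel_mul, rowSel_mutate, Matrix.mul_neg]

lemma key_identity (B : Matrix ι ι ℤ) (l : ι) (hB : B l l = 0) :
    (Jmat l + colSel l (posPart (-B))) * mutate l B
      = B * (Jmat l + rowSel l (posPart B)) := by
  ext i j
  rw [Matrix.add_mul, Matrix.mul_add, Matrix.add_apply, Matrix.add_apply,
    Jmat_mul_apply, mul_Jmat_apply, colSel_mul_apply, mul_rowSel_apply,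
    posPart_apply, posPart_apply, Matrix.neg_apply]
  by_cases hi : i = l
  · rw [hi, mutate_apply_left, hB]
    by_cases hj : j = l
    · rw [hj, hB]; norm_num
    · rw [if_pos rfl, if_neg hj]; norm_num
  · by_cases hj : j = l
    · rw [hj, if_neg hi, if_pos rfl, mutate_apply_right, mutate_apply_left, hB]
      norm_num
    · rw [if_neg hi, if_neg hj, mutate_apply_of_ne l B hi hj, mutate_apply_left]
      ring

lemma GB_eq_BC {B0 : Matrix ι ι ℤ} (h : IsSkewSymmetrizable B0) (w : List ι) :
    Gmat B0 w * Bmat B0 w = B0 * Cmat B0 w := by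
  induction w using List.reverseRecOn with
  | nil => rw [Gmat_nil, Cmat_nil, Bmat_nil, Matrix.one_mul, Matrix.mul_one]
  | append_singleton u l ih =>
      rw [Gmat_concat, Bmat_concat, Cmat_concat]
      set B := Bmat B0 u with hBdef
      set C := Cmat B0 u
      set G := Gmat B0 u
      have hB : B l l = 0 := ((h.bmat u).diag_zero l)
      have key := key_identity B l hB
      have hflip := colSel_mul_mutate (posPart (-C)) B l
      have expand : Gstep B0 B C G l * mutate l B
          = G * ((Jmat l + colSel l (posPart (-B))) * mutate l B)
            - B0 * (colSel l (posPart (-C)) * mutate l B) := by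
        rw [Gstep]; noncomm_ring
      rw [expand, key, hflip, ← Matrix.mul_assoc G B, ih, Cstep]
      noncomm_ring
end Helpers4
section Helpers5
set_option linter.unusedSectionVars false
variable {ι : Type*} [Fintype ι] [DecidableEq ι]

lemma rowSel_mul (A X : Matrix ι ι ℤ) (l : ι) : rowSel l A * X = rowSel l (A * X) := by
  ext i j; rw [rowSel_mul_apply, rowSel_apply]

lemma mul_colSel (X A : Matrix ι ι ℤ) (l : ι) : X * colSel l A = colSel l (X * A) := by
  ext i j; rw [mul_colSel_apply, colSel_apply]

lemma Jmat_sq (l : ι) : Jmat l * Jmat l = (1 : Matrix ι ι ℤ) := by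
  rw [Jmat, Matrix.diagonal_mul_diagonal]
  ext i j
  by_cases h : i = j
  · rw [h, Matrix.diagonal_apply_eq, Matrix.one_apply_eq]
    split <;> norm_num
  · rw [Matrix.diagonal_apply_ne _ h, Matrix.one_apply_ne h]

lemma Jmat_mul_rowSel (l : ι) (P : Matrix ι ι ℤ) :
    Jmat l * rowSel l P = -rowSel l P := by
  ext i j
  by_cases h : i = l <;> simp [Jmat_mul_apply, rowSel_apply, h]

lemma Jmat_mul_colSel (l : ι) (Q : Matrix ι ι ℤ) :
    Jmat l * colSel l Q = colSel l (Jmat l * Q) := by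
  ext i j
  rw [Jmat_mul_apply, colSel_apply, colSel_apply, Jmat_mul_apply]
  by_cases h : j = l
  · rw [if_pos h, if_pos h]
  · rw [if_neg h, if_neg h]; split <;> ring

lemma colSel_mul_Jmat (l : ι) (Q : Matrix ι ι ℤ) :
    colSel l Q * Jmat l = -colSel l Q := by
  ext i j
  by_cases h : j = l <;> simp [mul_Jmat_apply, colSel_apply, h]

lemma K_mul_K (l : ι) (P : Matrix ι ι ℤ) (hP : P l l = 0) :
    (Jmat l + rowSel l P) * (Jmat l + rowSel l P) = 1 := by
  rw [Matrix.add_mul, Matrix.mul_add, Matrix.mul_add, Jmat_sq, Jmat_mul_rowSel,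
    rowSel_mul, rowSel_mul]
  have h1 : rowSel l (P * rowSel l P) = 0 := by
    ext i j
    rw [rowSel_apply, mul_rowSel_apply, Matrix.zero_apply]
    split <;> [skip; rfl]
    next h => rw [h, hP]; ring
  have h2 : rowSel l (P * Jmat l) = rowSel l P := by
    ext i j
    rw [rowSel_apply, rowSel_apply, mul_Jmat_apply]
    by_cases hi : i = l
    · rw [if_pos hi, if_pos hi]
      by_cases hj : j = l
      · rw [if_pos hj, hi, hj, hP]; ring
      · rw [if_neg hj]
    · rw [if_neg hi, if_neg hi]
  rw [h1, h2]
  abel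

lemma L_mul_L (l : ι) (Q : Matrix ι ι ℤ) (hQ : Q l l = 0) :
    (Jmat l + colSel l Q) * (Jmat l + colSel l Q) = 1 := by
  rw [Matrix.add_mul, Matrix.mul_add, Matrix.mul_add, Jmat_sq, Jmat_mul_colSel,
    colSel_mul_Jmat, colSel_mul]
  have h1 : Q * rowSel l (colSel l Q) = 0 := by
    ext i j
    rw [mul_rowSel_apply, colSel_apply, Matrix.zero_apply]
    split <;> [skip; ring]
    next h => rw [h, hQ]; ring
  have h2 : colSel l (Jmat l * Q) = colSel l Q := by
    ext i j
    rw [colSel_apply, colSel_apply, Jmat_mul_apply]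
    by_cases hj : j = l
    · rw [if_pos hj, if_pos hj]
      by_cases hi : i = l
      · rw [if_pos hi, hi, hj, hQ]; ring
      · rw [if_neg hi]
    · rw [if_neg hj, if_neg hj]
  rw [h1, h2]
  abel

lemma sign_of_col (C : Matrix ι ι ℤ) (l : ι)
    (h : IsPositiveVec (fun i => C i l) ∨ IsNegativeVec (fun i => C i l)) :
    ∃ σ : ℤ, (σ = 1 ∨ σ = -1) ∧ (∀ i, 0 ≤ σ * C i l) ∧ ∃ i, C i l ≠ 0 := by
  rcases h with ⟨hne, hpos⟩ | ⟨hne, hneg⟩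
  · exact ⟨1, Or.inl rfl, fun i => by have := hpos i; linarith,
      by rcases Function.ne_iff.mp hne with ⟨i, hi⟩; exact ⟨i, hi⟩⟩
  · exact ⟨-1, Or.inr rfl, fun i => by have := hneg i; linarith,
      by rcases Function.ne_iff.mp hne with ⟨i, hi⟩; exact ⟨i, hi⟩⟩

lemma posPart_smul_diag_zero (σ : ℤ) (B : Matrix ι ι ℤ) (l : ι) (hB : B l l = 0) :
    posPart (σ • B) l l = 0 := by
  rw [smul_posPart_apply, hB, mul_zero]; rfl

lemma Cmat_isUnit {B0 : Matrix ι ι ℤ} (h : IsSkewSymmetrizable B0)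
    (hS : ∀ u : List ι, ColSignCoherent (Cmat B0 u)) (w : List ι) :
    IsUnit (Cmat B0 w) := by
  induction w using List.reverseRecOn with
  | nil => rw [Cmat_nil]; exact isUnit_one
  | append_singleton u l ih =>
      obtain ⟨σ, hσ, hcol, -⟩ := sign_of_col (Cmat B0 u) l (hS u l)
      rw [Cmat_concat, Cstep_factor (Bmat B0 u) (Cmat B0 u) l σ hσ hcol]
      have hk := K_mul_K l (posPart (σ • Bmat B0 u))
        (posPart_smul_diag_zero σ _ l ((h.bmat u).diag_zero l))
      exact ih.mul ⟨⟨_, _, hk, hk⟩, rfl⟩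

end Helpers5
section Helpers6
set_option linter.unusedSectionVars false
variable {ι : Type*} [Fintype ι] [DecidableEq ι]

/-- Skew-symmetry with a fixed symmetrizer. -/
def SkewWith (D : ι → ℚ) (B : Matrix ι ι ℤ) : Prop :=
  ∀ i j, D i * (B i j : ℚ) = -(D j * (B j i : ℚ))

lemma SkewWith.diag_zero {D : ι → ℚ} {B : Matrix ι ι ℤ} (hD : ∀ i, 0 < D i)
    (h : SkewWith D B) (i : ι) : B i i = 0 :=
  IsSkewSymmetrizable.diag_zero ⟨D, hD, h⟩ i

lemma SkewWith.mutate {D : ι → ℚ} {B : Matrix ι ι ℤ} (hD : ∀ i, 0 < D i)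
    (hskew : SkewWith D B) (k : ι) : SkewWith D (mutate k B) := by
  intro i j
  have key : ∀ a b : ι, D a * max (-(B a b) : ℚ) 0 = D b * max ((B b a) : ℚ) 0 := by
    intro a b
    rw [mul_max_of_nonneg _ _ (le_of_lt (hD a)), mul_max_of_nonneg _ _ (le_of_lt (hD b)),
      mul_zero, mul_zero]
    congr 1
    have := hskew a b; linarith
  by_cases hi : i = k
  · subst hi
    rw [mutate_apply_left, mutate_apply_right]
    push_cast
    have := hskew i j; linarith
  · by_cases hj : j = k
    · subst hj
      rw [mutate_apply_right, mutate_apply_left]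
      push_cast
      have := hskew i j; linarith
    · rw [mutate_apply_of_ne k B hi hj, mutate_apply_of_ne k B hj hi]
      push_cast [Int.cast_max]
      linear_combination hskew i j + (max ((B k j : ℚ)) 0) * hskew i k
        + ((B k i : ℚ)) * key j k + ((B k j : ℚ)) * key i k
        + (max ((B k i : ℚ)) 0) * hskew j k

lemma SkewWith.bmat {D : ι → ℚ} {B : Matrix ι ι ℤ} (hD : ∀ i, 0 < D i)
    (h : SkewWith D B) (w : List ι) : SkewWith D (Bmat B w) := by
  induction w generalizing B with
  | nil => exact h
  | cons a w ih => rw [Bmat_cons]; exact ih (h.mutate hD a)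

/-- Rational matrix associated to an integer matrix. -/
def ratMat (M : Matrix ι ι ℤ) : Matrix ι ι ℚ := M.map (Int.castRingHom ℚ)

lemma ratMat_mul (M N : Matrix ι ι ℤ) : ratMat (M * N) = ratMat M * ratMat N := by
  ext i j
  simp only [ratMat, Matrix.map_apply, Matrix.mul_apply, map_intCast, Int.coe_castRingHom]
  push_cast
  rfl

lemma ratMat_one : ratMat (1 : Matrix ι ι ℤ) = 1 := by
  simp [ratMat]

lemma ratMat_apply (M : Matrix ι ι ℤ) (i j : ι) : ratMat M i j = (M i j : ℚ) := rfl

lemma skew_posPart_fact {D : ι → ℚ} {B : Matrix ι ι ℤ} (hD : ∀ i, 0 < D i)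
    (hskew : SkewWith D B) (σ : ℤ) (i l : ι) :
    D i * ((posPart ((-σ) • B)) i l : ℚ) = ((posPart (σ • B)) l i : ℚ) * D l := by
  rw [smul_posPart_apply, smul_posPart_apply]
  push_cast [Int.cast_max]
  rw [mul_max_of_nonneg _ _ (le_of_lt (hD i)), max_mul_of_nonneg _ _ (le_of_lt (hD l)),
    mul_zero, zero_mul]
  congr 1
  have := hskew i l
  push_cast at this ⊢
  linear_combination (-(σ:ℚ)) * this

lemma DL_eq_KtD {D : ι → ℚ} {B : Matrix ι ι ℤ} (hD : ∀ i, 0 < D i)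
    (hskew : SkewWith D B) (σ : ℤ) (l : ι) :
    Matrix.diagonal D * ratMat (Jmat l + colSel l (posPart ((-σ) • B)))
      = (ratMat (Jmat l + rowSel l (posPart (σ • B))))ᵀ * Matrix.diagonal D := by
  ext i j
  rw [Matrix.diagonal_mul, Matrix.mul_diagonal, Matrix.transpose_apply,
    ratMat_apply, ratMat_apply, Matrix.add_apply, Matrix.add_apply,
    colSel_apply, rowSel_apply]
  have hfact := skew_posPart_fact hD hskew σ i l
  by_cases hj : j = l
  · rw [hj, if_pos rfl, if_pos rfl]
    push_cast
    have hDJ : D i * (Jmat l i l : ℚ) = (Jmat l l i : ℚ) * D l := by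
      by_cases hil : i = l
      · rw [hil]; ring
      · rw [Jmat_apply, Jmat_apply, if_neg hil, if_neg fun hh => hil hh.symm]
        push_cast; ring
    linear_combination hDJ + hfact
  · rw [if_neg hj, if_neg hj]
    push_cast
    by_cases hij : i = j
    · rw [hij]; ring
    · rw [Jmat_apply, Jmat_apply, if_neg hij, if_neg fun hh => hij hh.symm]
      push_cast; ring

lemma CtDG {B0 : Matrix ι ι ℤ} {D : ι → ℚ} (hD : ∀ i, 0 < D i) (hBD : SkewWith D B0)
    (hS : ∀ u : List ι, ColSignCoherent (Cmat B0 u)) (w : List ι) :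
    (ratMat (Cmat B0 w))ᵀ * Matrix.diagonal D * ratMat (Gmat B0 w) = Matrix.diagonal D := by
  induction w using List.reverseRecOn with
  | nil =>
      rw [Cmat_nil, Gmat_nil, ratMat_one, Matrix.transpose_one, Matrix.one_mul, Matrix.mul_one]
  | append_singleton u l ih =>
      have hsk : IsSkewSymmetrizable B0 := ⟨D, hD, hBD⟩
      obtain ⟨σ, hσ, hcol, -⟩ := sign_of_col (Cmat B0 u) l (hS u l)
      have hBl : Bmat B0 u l l = 0 := (hBD.bmat hD u).diag_zero hD l
      have hC' := Cstep_factor (Bmat B0 u) (Cmat B0 u) l σ hσ hcol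
      have hG' := Gstep_factor B0 (Bmat B0 u) (Cmat B0 u) (Gmat B0 u) l σ hσ hcol
        (GB_eq_BC hsk u)
      rw [Cmat_concat, Gmat_concat, hC', hG', ratMat_mul, ratMat_mul,
        Matrix.transpose_mul]
      have hDL := DL_eq_KtD hD (hBD.bmat hD u) σ l
      have hKK : ratMat ((Jmat l + rowSel l (posPart (σ • Bmat B0 u)))
          * (Jmat l + rowSel l (posPart (σ • Bmat B0 u)))) = 1 := by
        rw [K_mul_K l _ (posPart_smul_diag_zero σ _ l hBl), ratMat_one]
      calc (ratMat (Jmat l + rowSel l (posPart (σ • Bmat B0 u))))ᵀ * (ratMat (Cmat B0 u))ᵀ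
            * Matrix.diagonal D
            * (ratMat (Gmat B0 u) * ratMat (Jmat l + colSel l (posPart ((-σ) • Bmat B0 u))))
          = (ratMat (Jmat l + rowSel l (posPart (σ • Bmat B0 u))))ᵀ
            * ((ratMat (Cmat B0 u))ᵀ * Matrix.diagonal D * ratMat (Gmat B0 u))
            * ratMat (Jmat l + colSel l (posPart ((-σ) • Bmat B0 u))) := by
              noncomm_ring
        _ = (ratMat (Jmat l + rowSel l (posPart (σ • Bmat B0 u))))ᵀ
            * (Matrix.diagonal D * ratMat (Jmat l + colSel l (posPart ((-σ) • Bmat B0 u)))) := by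
              rw [ih]; noncomm_ring
        _ = Matrix.diagonal D := by
              rw [hDL, ← Matrix.mul_assoc, ← Matrix.transpose_mul, ← ratMat_mul, hKK,
                Matrix.transpose_one, Matrix.one_mul]
end Helpers6
section Helpers7
set_option linter.unusedSectionVars false
variable {ι : Type*} [Fintype ι] [DecidableEq ι]

lemma Jmat_transpose (l : ι) : (Jmat l)ᵀ = Jmat l := by
  rw [Jmat, Matrix.diagonal_transpose]

lemma rowSel_transpose (l : ι) (P : Matrix ι ι ℤ) : (rowSel l P)ᵀ = colSel l Pᵀ := by
  ext i j
  rw [Matrix.transpose_apply, rowSel_apply, colSel_apply, Matrix.transpose_apply]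

lemma posPart_smul_transpose (s : ℤ) (B : Matrix ι ι ℤ) :
    (posPart (s • Bᵀ))ᵀ = posPart (s • B) := by
  ext i j
  rw [Matrix.transpose_apply, smul_posPart_apply, smul_posPart_apply, Matrix.transpose_apply]

lemma K_transpose (l : ι) (s : ℤ) (B : Matrix ι ι ℤ) :
    (Jmat l + rowSel l (posPart (s • Bᵀ)))ᵀ = Jmat l + colSel l (posPart (s • B)) := by
  rw [Matrix.transpose_add, Jmat_transpose, rowSel_transpose, posPart_smul_transpose]

lemma M_mul_apply_ne (k : ι) (P C : Matrix ι ι ℤ) {i : ι} (h : i ≠ k) (j : ι) :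
    ((Jmat k + rowSel k P) * C) i j = C i j := by
  rw [Matrix.add_mul, Matrix.add_apply, Jmat_mul_apply, rowSel_mul_apply,
    if_neg h, if_neg h, add_zero]

lemma M_mul_apply_k (k : ι) (P C : Matrix ι ι ℤ) (j : ι) :
    ((Jmat k + rowSel k P) * C) k j = -C k j + (P * C) k j := by
  rw [Matrix.add_mul, Matrix.add_apply, Jmat_mul_apply, rowSel_mul_apply,
    if_pos rfl, if_pos rfl]

lemma mul_L_apply_ne (l : ι) (Q X : Matrix ι ι ℤ) (i : ι) {j : ι} (h : j ≠ l) :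
    (X * (Jmat l + colSel l Q)) i j = X i j := by
  rw [Matrix.mul_add, Matrix.add_apply, mul_Jmat_apply, mul_colSel_apply,
    if_neg h, if_neg h, add_zero]

lemma mul_L_apply_l (l : ι) (Q X : Matrix ι ι ℤ) (i : ι) :
    (X * (Jmat l + colSel l Q)) i l = -X i l + (X * Q) i l := by
  rw [Matrix.mul_add, Matrix.add_apply, mul_Jmat_apply, mul_colSel_apply,
    if_pos rfl, if_pos rfl]

lemma rowSel_sub (l : ι) (P Q : Matrix ι ι ℤ) :
    rowSel l (P - Q) = rowSel l P - rowSel l Q := by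
  ext i j
  rw [Matrix.sub_apply, rowSel_apply, rowSel_apply, rowSel_apply, Matrix.sub_apply]
  split <;> simp

lemma colSel_sub (l : ι) (P Q : Matrix ι ι ℤ) :
    colSel l (P - Q) = colSel l P - colSel l Q := by
  ext i j
  rw [Matrix.sub_apply, colSel_apply, colSel_apply, colSel_apply, Matrix.sub_apply]
  split <;> simp

lemma posPart_smul_sub (s : ℤ) (B : Matrix ι ι ℤ) :
    posPart (s • B) - posPart ((-s) • B) = s • B := by
  have h : -(s • B) = (-s) • B := by rw [neg_smul]
  rw [← h, posPart_sub_posPart_neg]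

lemma K_diff (l : ι) (s : ℤ) (B : Matrix ι ι ℤ) :
    (Jmat l + rowSel l (posPart (s • B)))
      = (Jmat l + rowSel l (posPart ((-s) • B))) + rowSel l (s • B) := by
  have h2 := rowSel_sub l (posPart (s • B)) (posPart ((-s) • B))
  rw [posPart_smul_sub] at h2
  rw [h2]
  abel

lemma L_diff (l : ι) (s : ℤ) (B : Matrix ι ι ℤ) :
    (Jmat l + colSel l (posPart (s • B)))
      = (Jmat l + colSel l (posPart ((-s) • B))) + colSel l (s • B) := by
  have h2 := colSel_sub l (posPart (s • B)) (posPart ((-s) • B))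
  rw [posPart_smul_sub] at h2
  rw [h2]
  abel

lemma B_row_fixed (l : ι) (B P : Matrix ι ι ℤ) (hB : B l l = 0) (j : ι) :
    (B * (Jmat l + rowSel l P)) l j = B l j := by
  rw [Matrix.mul_add, Matrix.add_apply, mul_Jmat_apply, mul_rowSel_apply, hB, zero_mul,
    add_zero]
  split <;> [skip; rfl]
  next h => rw [h, hB, neg_zero]

lemma isUnit_of_transpose {M : Matrix ι ι ℤ} (h : IsUnit Mᵀ) : IsUnit M := by
  rw [Matrix.isUnit_iff_isUnit_det] at h ⊢
  rwa [Matrix.det_transpose] at h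

lemma posPart_neg_one : posPart (-(1 : Matrix ι ι ℤ)) = 0 := by
  ext i j
  rw [posPart_apply, Matrix.neg_apply, Matrix.zero_apply]
  by_cases h : i = j
  · rw [h, Matrix.one_apply_eq]; rfl
  · rw [Matrix.one_apply_ne h]; rfl

lemma Cmat_singleton (B : Matrix ι ι ℤ) (k : ι) :
    Cmat B [k] = Jmat k + rowSel k (posPart B) := by
  have h : [k] = ([] : List ι) ++ [k] := rfl
  rw [h, Cmat_concat, Bmat_nil, Cmat_nil, Cstep, posPart_neg_one]
  have h2 : colSel k (0 : Matrix ι ι ℤ) = 0 := by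
    ext i j; rw [colSel_apply, Matrix.zero_apply]; split <;> rfl
  rw [h2, Matrix.zero_mul, Matrix.one_mul, Matrix.one_mul, add_zero]

lemma Gmat_singleton (B : Matrix ι ι ℤ) (k : ι) :
    Gmat B [k] = Jmat k + colSel k (posPart (-B)) := by
  have h : [k] = ([] : List ι) ++ [k] := rfl
  rw [h, Gmat_concat, Bmat_nil, Cmat_nil, Gmat_nil, Gstep, posPart_neg_one]
  have h2 : colSel k (0 : Matrix ι ι ℤ) = 0 := by
    ext i j; rw [colSel_apply, Matrix.zero_apply]; split <;> rfl
  rw [h2, Matrix.mul_zero, Matrix.one_mul, Matrix.one_mul, sub_zero]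

lemma rowSel_posPart_mutate (B : Matrix ι ι ℤ) (k : ι) :
    rowSel k (posPart (mutate k B)) = rowSel k (posPart ((-(1:ℤ)) • B)) := by
  ext i j
  rw [rowSel_apply, rowSel_apply, posPart_apply, smul_posPart_apply]
  split <;> [skip; rfl]
  next h => rw [h, mutate_apply_left]; norm_num

lemma colSel_posPart_mutate (B : Matrix ι ι ℤ) (k : ι) :
    colSel k (posPart (-mutate k B)) = colSel k (posPart ((1:ℤ) • B)) := by
  ext i j
  rw [colSel_apply, colSel_apply, posPart_apply, Matrix.neg_apply, smul_posPart_apply]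
  split <;> [skip; rfl]
  next h => rw [h, mutate_apply_right]; norm_num

end Helpers7
section Helpers8
set_option linter.unusedSectionVars false
variable {ι : Type*} [Fintype ι] [DecidableEq ι]

lemma triple_entry (C G : Matrix ι ι ℤ) (D : ι → ℚ) (k l j : ι)
    (h : (ratMat C)ᵀ * Matrix.diagonal D * ratMat G = Matrix.diagonal D)
    (hz : ∀ i, i ≠ k → C i l = 0) :
    (C k l : ℚ) * D k * (G k j : ℚ) = Matrix.diagonal D l j := by
  have he : ((ratMat C)ᵀ * Matrix.diagonal D * ratMat G) l j = Matrix.diagonal D l j := by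
    rw [h]
  have hterm : ∀ m, ((ratMat C)ᵀ * Matrix.diagonal D) l m = (C m l : ℚ) * D m := fun m => by
    rw [Matrix.mul_diagonal, Matrix.transpose_apply, ratMat_apply]
  rw [Matrix.mul_apply, Finset.sum_eq_single k] at he
  · rw [hterm, ratMat_apply] at he
    exact he
  · intro m _ hmk
    rw [hterm, hz m hmk]
    push_cast
    ring
  · intro hk
    exact absurd (Finset.mem_univ k) hk

lemma expand_step (M' R0 C K' R : Matrix ι ι ℤ)
    (h : ((M' + R0) * C) * R + R0 * (C * K') = 0) :
    ((M' + R0) * C) * (K' + R) = M' * (C * K') := by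
  have h2 : ((M' + R0) * C) * (K' + R)
      = M' * (C * K') + (((M' + R0) * C) * R + R0 * (C * K')) := by noncomm_ring
  rw [h2, h, add_zero]

end Helpers8

section Master
set_option linter.unusedSectionVars false
variable {ι : Type*} [Fintype ι] [DecidableEq ι]

theorem master
    (hsc : ∀ B : Matrix ι ι ℤ, IsSkewSymmetrizable B → ∀ w : List ι, ColSignCoherent (Cmat B w)) :
    ∀ (r : ℕ) (B0 : Matrix ι ι ℤ), IsSkewSymmetrizable B0 → ∀ w : List ι, w.length = r →
      (Gmat B0 w = (Cmat (Bmat B0 w)ᵀ w.reverse)ᵀ) ∧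
      ∀ k : ι, ∃ ε : ℤ, (ε = 1 ∨ ε = -1) ∧ (∀ j, 0 ≤ ε * Gmat B0 w k j) ∧
        (∃ j, Gmat B0 w k j ≠ 0) ∧
        Cmat (mutate k B0) (k :: w) = (Jmat k + rowSel k (posPart ((-ε) • B0))) * Cmat B0 w ∧
        Gmat (mutate k B0) (k :: w) = (Jmat k + colSel k (posPart (ε • B0))) * Gmat B0 w := by
  intro r
  induction r with
  | zero =>
      intro B0 hB0 w hw
      rw [List.length_eq_zero_iff] at hw
      subst hw
      constructor
      · rw [Gmat_nil, Bmat_nil, List.reverse_nil, Cmat_nil, Matrix.transpose_one]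
      · intro k
        refine ⟨1, Or.inl rfl, ?_, ⟨k, ?_⟩, ?_, ?_⟩
        · intro j
          rw [Gmat_nil, one_mul]
          rcases eq_or_ne k j with h | h
          · rw [h, Matrix.one_apply_eq]; norm_num
          · rw [Matrix.one_apply_ne h]
        · rw [Gmat_nil, Matrix.one_apply_eq]; norm_num
        · rw [Cmat_singleton, Cmat_nil, Matrix.mul_one, rowSel_posPart_mutate]
        · rw [Gmat_singleton, Gmat_nil, Matrix.mul_one, colSel_posPart_mutate]
  | succ r IH =>
      intro B0 hB0 w hw
      cases w using List.reverseRecOn with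
      | nil => simp at hw
      | append_singleton u l =>
        have hu : u.length = r := by
          rw [List.length_append, List.length_singleton] at hw
          omega
        have hskB : IsSkewSymmetrizable (Bmat B0 u) := hB0.bmat u
        have hskBT : IsSkewSymmetrizable (Bmat B0 u)ᵀ := hskB.transpose
        have hBll : Bmat B0 u l l = 0 := hskB.diag_zero l
        have hIHB0 := IH B0 hB0 u hu
        have hIHBT := IH (Bmat B0 u)ᵀ hskBT u.reverse (by simp [hu])
        have haB0 : Gmat B0 u = (Cmat (Bmat B0 u)ᵀ u.reverse)ᵀ := hIHB0.1
        have hBrev : Bmat (Bmat B0 u)ᵀ u.reverse = B0ᵀ := by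
          rw [← Bmat_transpose, Bmat_reverse]
        have haBT : Gmat (Bmat B0 u)ᵀ u.reverse = (Cmat B0 u)ᵀ := by
          have h := hIHBT.1
          rwa [hBrev, Matrix.transpose_transpose, List.reverse_reverse] at h
        obtain ⟨et, het1, hetsgn, hetnz, hetC, hetG⟩ := hIHBT.2 l
        have hcolC : ∀ i, 0 ≤ et * Cmat B0 u i l := by
          intro i
          have h := hetsgn i
          rwa [haBT, Matrix.transpose_apply] at h
        have hnzC : ∃ i, Cmat B0 u i l ≠ 0 := by
          obtain ⟨j, hj⟩ := hetnz
          rw [haBT, Matrix.transpose_apply] at hj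
          exact ⟨j, hj⟩
        have hH1 := GB_eq_BC hB0 u
        have hCfact : Cmat B0 (u ++ [l])
            = Cmat B0 u * (Jmat l + rowSel l (posPart (et • Bmat B0 u))) := by
          rw [Cmat_concat]; exact Cstep_factor _ _ l et het1 hcolC
        have hGfact : Gmat B0 (u ++ [l])
            = Gmat B0 u * (Jmat l + colSel l (posPart ((-et) • Bmat B0 u))) := by
          rw [Gmat_concat]; exact Gstep_factor _ _ _ _ l et het1 hcolC hH1
        have hCrevG : Cmat (Bmat B0 u)ᵀ u.reverse = (Gmat B0 u)ᵀ := by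
          rw [haB0, Matrix.transpose_transpose]
        have hanew : Gmat B0 (u ++ [l])
            = (Cmat (Bmat B0 (u ++ [l]))ᵀ (u ++ [l]).reverse)ᵀ := by
          have hmutT : (Bmat B0 (u ++ [l]))ᵀ = mutate l (Bmat B0 u)ᵀ := by
            rw [Bmat_concat, mutate_transpose]
          have hrevw : (u ++ [l]).reverse = l :: u.reverse := by simp
          rw [hmutT, hrevw, hetC, hCrevG, Matrix.transpose_mul, Matrix.transpose_transpose,
            K_transpose, hGfact]
        refine ⟨hanew, ?_⟩
        intro k
        obtain ⟨ε, hε1, hsgnG, hnzG, hC1, hG1⟩ := hIHB0.2 k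
        have hsk1 : IsSkewSymmetrizable (mutate k B0) := hB0.mutate k
        have hB1eq : Bmat (mutate k B0) (k :: u) = Bmat B0 u := Bmat_mutate_cons B0 k u
        have hconsw : (k : ι) :: (u ++ [l]) = (k :: u) ++ [l] := rfl
        have hC1concat : Cmat (mutate k B0) (k :: (u ++ [l]))
            = Cstep (Bmat B0 u) (Cmat (mutate k B0) (k :: u)) l := by
          rw [hconsw, Cmat_concat, hB1eq]
        have hG1concat : Gmat (mutate k B0) (k :: (u ++ [l]))
            = Gstep (mutate k B0) (Bmat B0 u) (Cmat (mutate k B0) (k :: u))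
                (Gmat (mutate k B0) (k :: u)) l := by
          rw [hconsw, Gmat_concat, hB1eq]
        have hH1' : Gmat (mutate k B0) (k :: u) * Bmat B0 u
            = mutate k B0 * Cmat (mutate k B0) (k :: u) := by
          have h := GB_eq_BC hsk1 (k :: u)
          rwa [hB1eq] at h
        obtain ⟨D, hDpos, hskewD⟩ := id hB0
        have hCDG := CtDG hDpos hskewD (hsc B0 hB0) u
        by_cases hEx : ∀ j, j ≠ l → Gmat B0 u k j = 0
        · -- case E
          have hB0kk : B0 k k = 0 := hB0.diag_zero k
          have hgl : Gmat B0 u k l ≠ 0 := by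
            obtain ⟨j, hj⟩ := hnzG
            by_cases hjl : j = l
            · rwa [hjl] at hj
            · exact absurd (hEx j hjl) hj
          have hGunit : IsUnit (Gmat B0 u) := by
            have h := Cmat_isUnit hskBT (hsc _ hskBT) u.reverse
            rw [hCrevG] at h
            exact isUnit_of_transpose h
          obtain ⟨Gu, hGu⟩ := hGunit
          have hGW : Gmat B0 u * (↑Gu⁻¹ : Matrix ι ι ℤ) = 1 := by
            rw [← hGu]; exact Gu.mul_inv
          have hrowW : ∀ j, Gmat B0 u k l * (↑Gu⁻¹ : Matrix ι ι ℤ) l j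
              = (1 : Matrix ι ι ℤ) k j := by
            intro j
            have he : (Gmat B0 u * (↑Gu⁻¹ : Matrix ι ι ℤ)) k j = (1 : Matrix ι ι ℤ) k j := by
              rw [hGW]
            rw [Matrix.mul_apply, Finset.sum_eq_single l] at he
            · exact he
            · intro m _ hml; rw [hEx m hml, zero_mul]
            · intro hl; exact absurd (Finset.mem_univ l) hl
          have hgpm : Gmat B0 u k l = 1 ∨ Gmat B0 u k l = -1 := by
            have h := hrowW k
            rw [Matrix.one_apply_eq] at h
            exact Int.isUnit_iff.mp (IsUnit.of_mul_eq_one _ h)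
          have hgε : Gmat B0 u k l = ε := by
            have hsl := hsgnG l
            rcases hgpm with h | h <;> rcases hε1 with h2 | h2 <;> rw [h, h2] at hsl ⊢ <;> omega
          have hWlk : (↑Gu⁻¹ : Matrix ι ι ℤ) l k = ε := by
            have h := hrowW k
            rw [Matrix.one_apply_eq, hgε] at h
            rcases hε1 with h2 | h2 <;> rw [h2] at h ⊢ <;> omega
          have hWli0 : ∀ i, i ≠ k → (↑Gu⁻¹ : Matrix ι ι ℤ) l i = 0 := by
            intro i hik
            have h := hrowW i
            rw [Matrix.one_apply_ne (Ne.symm hik)] at h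
            rcases mul_eq_zero.mp h with h2 | h2
            · exact absurd h2 hgl
            · exact h2
          have hVD : (ratMat (Cmat B0 u))ᵀ * Matrix.diagonal D
              = Matrix.diagonal D * ratMat (↑Gu⁻¹ : Matrix ι ι ℤ) := by
            have h1 : ratMat (Gmat B0 u) * ratMat (↑Gu⁻¹ : Matrix ι ι ℤ) = 1 := by
              rw [← ratMat_mul, hGW, ratMat_one]
            calc (ratMat (Cmat B0 u))ᵀ * Matrix.diagonal D
                = (ratMat (Cmat B0 u))ᵀ * Matrix.diagonal D
                  * (ratMat (Gmat B0 u) * ratMat (↑Gu⁻¹ : Matrix ι ι ℤ)) := by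
                  rw [h1, Matrix.mul_one]
              _ = ((ratMat (Cmat B0 u))ᵀ * Matrix.diagonal D * ratMat (Gmat B0 u))
                  * ratMat (↑Gu⁻¹ : Matrix ι ι ℤ) := by rw [← Matrix.mul_assoc]
              _ = Matrix.diagonal D * ratMat (↑Gu⁻¹ : Matrix ι ι ℤ) := by rw [hCDG]
          have hColl : ∀ i, (Cmat B0 u i l : ℚ) * D i
              = D l * (((↑Gu⁻¹ : Matrix ι ι ℤ) l i : ℚ)) := by
            intro i
            have h : ((ratMat (Cmat B0 u))ᵀ * Matrix.diagonal D) l i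
                = (Matrix.diagonal D * ratMat (↑Gu⁻¹ : Matrix ι ι ℤ)) l i := by rw [hVD]
            rwa [Matrix.mul_diagonal, Matrix.diagonal_mul, Matrix.transpose_apply,
              ratMat_apply, ratMat_apply] at h
          have hCil0 : ∀ i, i ≠ k → Cmat B0 u i l = 0 := by
            intro i hik
            have h := hColl i
            rw [hWli0 i hik] at h
            push_cast at h
            rw [mul_zero] at h
            have hDi : D i ≠ 0 := (hDpos i).ne'
            have hc0 : (Cmat B0 u i l : ℚ) = 0 := by
              rcases mul_eq_zero.mp h with h2 | h2
              · exact h2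
              · exact absurd h2 hDi
            exact_mod_cast hc0
          have hCunit := Cmat_isUnit hB0 (hsc B0 hB0) u
          obtain ⟨Cu, hCu⟩ := hCunit
          have hCiC : (↑Cu⁻¹ : Matrix ι ι ℤ) * Cmat B0 u = 1 := by
            rw [← hCu]; exact Cu.inv_mul
          have hcpm : Cmat B0 u k l = 1 ∨ Cmat B0 u k l = -1 := by
            have he : ((↑Cu⁻¹ : Matrix ι ι ℤ) * Cmat B0 u) l l = 1 := by
              rw [hCiC, Matrix.one_apply_eq]
            rw [Matrix.mul_apply, Finset.sum_eq_single k] at he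
            · rw [mul_comm] at he
              exact Int.isUnit_iff.mp (IsUnit.of_mul_eq_one _ he)
            · intro m _ hmk; rw [hCil0 m hmk, mul_zero]
            · intro hk2; exact absurd (Finset.mem_univ k) hk2
          have hcε : Cmat B0 u k l = ε := by
            have h := hColl k
            rw [hWlk] at h
            rcases hcpm with h1 | h1 <;> rcases hε1 with h2 | h2 <;> rw [h1, h2] at h ⊢ <;>
              push_cast at h <;> nlinarith [hDpos k, hDpos l]
          have hε2 : ε * ε = 1 := by rcases hε1 with h | h <;> rw [h] <;> norm_num
          have hC1col : ∀ i, Cmat (mutate k B0) (k :: u) i l = if i = k then -ε else 0 := by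
            intro i
            by_cases hik : i = k
            · rw [if_pos hik, hik, hC1, M_mul_apply_k]
              have hsum : (posPart ((-ε) • B0) * Cmat B0 u) k l = 0 := by
                rw [Matrix.mul_apply, Finset.sum_eq_single k]
                · rw [smul_posPart_apply, hB0kk, mul_zero]
                  simp
                · intro m _ hmk; rw [hCil0 m hmk, mul_zero]
                · intro hk2; exact absurd (Finset.mem_univ k) hk2
              rw [hsum, hcε]
              ring
            · rw [if_neg hik, hC1, M_mul_apply_ne k _ _ hik]
              exact hCil0 i hik
          have hcolCε : ∀ i, 0 ≤ ε * Cmat B0 u i l := by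
            intro i
            by_cases hik : i = k
            · rw [hik, hcε, hε2]; norm_num
            · rw [hCil0 i hik, mul_zero]
          have hnegε1 : (-ε = 1 ∨ -ε = -1) := by
            rcases hε1 with h | h
            · right; rw [h]
            · left; rw [h]; norm_num
          have hcolC1ε : ∀ i, 0 ≤ (-ε) * Cmat (mutate k B0) (k :: u) i l := by
            intro i
            rw [hC1col i]
            by_cases hik : i = k
            · rw [if_pos hik]; nlinarith [hε2]
            · rw [if_neg hik, mul_zero]
          have hC'fact : Cmat B0 (u ++ [l])
              = Cmat B0 u * (Jmat l + rowSel l (posPart (ε • Bmat B0 u))) := by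
            rw [Cmat_concat]; exact Cstep_factor _ _ l ε hε1 hcolCε
          have hG'fact : Gmat B0 (u ++ [l])
              = Gmat B0 u * (Jmat l + colSel l (posPart ((-ε) • Bmat B0 u))) := by
            rw [Gmat_concat]; exact Gstep_factor _ _ _ _ l ε hε1 hcolCε hH1
          have hC1'fact : Cmat (mutate k B0) (k :: (u ++ [l]))
              = Cmat (mutate k B0) (k :: u)
                * (Jmat l + rowSel l (posPart ((-ε) • Bmat B0 u))) := by
            rw [hC1concat]; exact Cstep_factor _ _ l (-ε) hnegε1 hcolC1ε
          have hG1'fact : Gmat (mutate k B0) (k :: (u ++ [l]))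
              = Gmat (mutate k B0) (k :: u)
                * (Jmat l + colSel l (posPart ((-(-ε)) • Bmat B0 u))) := by
            rw [hG1concat]; exact Gstep_factor _ _ _ _ l (-ε) hnegε1 hcolC1ε hH1'
          rw [neg_neg] at hG1'fact
          have hG'row : ∀ j, Gmat B0 (u ++ [l]) k j = if j = l then -ε else 0 := by
            intro j
            rw [hG'fact]
            by_cases hj : j = l
            · rw [if_pos hj, hj, mul_L_apply_l]
              have hsum : (Gmat B0 u * posPart ((-ε) • Bmat B0 u)) k l = 0 := by
                rw [Matrix.mul_apply, Finset.sum_eq_single l]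
                · rw [smul_posPart_apply, hBll, mul_zero]
                  simp
                · intro m _ hml; rw [hEx m hml, zero_mul]
                · intro hl2; exact absurd (Finset.mem_univ l) hl2
              rw [hsum, hgε, add_zero]
            · rw [if_neg hj, mul_L_apply_ne l _ _ k hj]
              exact hEx j hj
          have hsgn' : ∀ j, 0 ≤ (-ε) * Gmat B0 (u ++ [l]) k j := by
            intro j
            rw [hG'row j]
            by_cases hj : j = l
            · rw [if_pos hj]; nlinarith [hε2]
            · rw [if_neg hj, mul_zero]
          have hnz' : ∃ j, Gmat B0 (u ++ [l]) k j ≠ 0 := by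
            refine ⟨l, ?_⟩
            rw [hG'row l, if_pos rfl]
            rcases hε1 with h | h <;> rw [h] <;> norm_num
          have hBCK : B0 * (Cmat B0 u * (Jmat l + rowSel l (posPart (ε • Bmat B0 u))))
              = Gmat B0 u * (Bmat B0 u * (Jmat l + rowSel l (posPart (ε • Bmat B0 u)))) := by
            rw [← Matrix.mul_assoc, ← hH1, Matrix.mul_assoc]
          have hGBK : ∀ j,
              (Gmat B0 u * (Bmat B0 u * (Jmat l + rowSel l (posPart (ε • Bmat B0 u))))) k j
              = ε * Bmat B0 u l j := by
            intro j
            rw [Matrix.mul_apply, Finset.sum_eq_single l]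
            · rw [hgε, B_row_fixed l (Bmat B0 u) _ hBll]
            · intro m _ hml; rw [hEx m hml, zero_mul]
            · intro hl2; exact absurd (Finset.mem_univ l) hl2
          have hMC : ∀ i, ((Jmat k + rowSel k (posPart ((-ε) • B0))) * Cmat B0 u) i l
              = if i = k then -ε else 0 := by
            intro i; rw [← hC1]; exact hC1col i
          have hzero1 : ((Jmat k + rowSel k (posPart ((-ε) • B0))) * Cmat B0 u)
                * rowSel l ((-ε) • Bmat B0 u)
              + rowSel k ((-ε) • B0)
                * (Cmat B0 u * (Jmat l + rowSel l (posPart (ε • Bmat B0 u)))) = 0 := by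
            ext i j
            rw [Matrix.add_apply, mul_rowSel_apply, rowSel_mul_apply, Matrix.zero_apply]
            by_cases hik : i = k
            · rw [hik, hMC k, if_pos rfl, if_pos rfl]
              have h2 : (((-ε) • B0)
                  * (Cmat B0 u * (Jmat l + rowSel l (posPart (ε • Bmat B0 u))))) k j
                  = -ε * (ε * Bmat B0 u l j) := by
                rw [Matrix.smul_mul, Matrix.smul_apply, smul_eq_mul, hBCK, hGBK j]
              rw [h2, Matrix.smul_apply, smul_eq_mul]
              ring
            · rw [hMC i, if_neg hik, if_neg hik, zero_mul, add_zero]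
          have hK := K_diff l (-ε) (Bmat B0 u)
          rw [neg_neg] at hK
          have hM := K_diff k (-ε) B0
          rw [neg_neg] at hM
          have hT1 : Cmat (mutate k B0) (k :: (u ++ [l]))
              = (Jmat k + rowSel k (posPart ((-(-ε)) • B0))) * Cmat B0 (u ++ [l]) := by
            rw [neg_neg, hC1'fact, hC1, hC'fact, hK, hM]
            have hz := hzero1
            rw [hM] at hz
            exact expand_step _ _ _ _ _ hz
          have hGL : ∀ j, (Gmat B0 u * (Jmat l + colSel l (posPart ((-ε) • Bmat B0 u)))) k j
              = if j = l then -ε else 0 := by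
            intro j; rw [← hG'fact]; exact hG'row j
          have hzero2 : ((Jmat k + colSel k (posPart (ε • B0))) * Gmat B0 u)
                * colSel l (ε • Bmat B0 u)
              + colSel k (ε • B0)
                * (Gmat B0 u * (Jmat l + colSel l (posPart ((-ε) • Bmat B0 u)))) = 0 := by
            ext i j
            rw [Matrix.add_apply, mul_colSel_apply, colSel_mul_apply, Matrix.zero_apply, hGL j]
            by_cases hj : j = l
            · rw [if_pos hj, if_pos hj, hj]
              have h1 : ((Jmat k + colSel k (posPart (ε • B0))) * Gmat B0 u) * (ε • Bmat B0 u)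
                  = ε • (((Jmat k + colSel k (posPart (ε • B0))) * Gmat B0 u) * Bmat B0 u) := by
                rw [Matrix.mul_smul]
              have h2 : ((Jmat k + colSel k (posPart (ε • B0))) * Gmat B0 u) * Bmat B0 u
                  = mutate k B0 * Cmat (mutate k B0) (k :: u) := by
                rw [← hG1]; exact hH1'
              have h3 : (mutate k B0 * Cmat (mutate k B0) (k :: u)) i l = ε * B0 i k := by
                rw [Matrix.mul_apply, Finset.sum_eq_single k]
                · rw [hC1col k, if_pos rfl, mutate_apply_right]
                  ring
                · intro m _ hmk; rw [hC1col m, if_neg hmk, mul_zero]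
                · intro hk2; exact absurd (Finset.mem_univ k) hk2
              rw [h1, Matrix.smul_apply, smul_eq_mul, h2, h3, Matrix.smul_apply, smul_eq_mul]
              ring
            · rw [if_neg hj, if_neg hj, mul_zero, add_zero]
          have hL2 := L_diff l ε (Bmat B0 u)
          have hN2 := L_diff k ε B0
          have hT2 : Gmat (mutate k B0) (k :: (u ++ [l]))
              = (Jmat k + colSel k (posPart ((-ε) • B0))) * Gmat B0 (u ++ [l]) := by
            rw [hG1'fact, hG1, hG'fact, hL2, hN2]
            have hz := hzero2
            rw [hN2] at hz
            exact expand_step _ _ _ _ _ hz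
          exact ⟨-ε, hnegε1, hsgn', hnz', hT1, hT2⟩

        · -- case not-E
          push_neg at hEx
          obtain ⟨j0, hj0l, hj0⟩ := hEx
          obtain ⟨σ1, hσ11, hcol1, -⟩ := sign_of_col _ l (hsc _ hsk1 (k :: u) l)
          have hC1il : ∀ i, i ≠ k → Cmat (mutate k B0) (k :: u) i l = Cmat B0 u i l := by
            intro i hik; rw [hC1, M_mul_apply_ne k _ _ hik]
          have hcontra : (∀ i, i ≠ k → Cmat B0 u i l = 0) → False := by
            intro hCil
            have hCkl : Cmat B0 u k l ≠ 0 := by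
              obtain ⟨i, hi⟩ := hnzC
              by_cases hik : i = k
              · rwa [hik] at hi
              · exact absurd (hCil i hik) hi
            have ht := triple_entry _ _ D k l j0 hCDG hCil
            rw [Matrix.diagonal_apply_ne _ (Ne.symm hj0l)] at ht
            have hDk : D k ≠ 0 := (hDpos k).ne'
            have hCq : (Cmat B0 u k l : ℚ) ≠ 0 := Int.cast_ne_zero.mpr hCkl
            have hGq : (Gmat B0 u k j0 : ℚ) = 0 := by
              rcases mul_eq_zero.mp ht with h | h
              · rcases mul_eq_zero.mp h with h2 | h2
                · exact absurd h2 hCq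
                · exact absurd h2 hDk
              · exact h
            exact hj0 (by exact_mod_cast hGq)
          have hcolC1 : ∀ i, 0 ≤ et * Cmat (mutate k B0) (k :: u) i l := by
            rcases het1 with he | he <;> rcases hσ11 with hs | hs
            · intro i; have h2 := hcol1 i; rw [hs] at h2; rwa [he]
            · exfalso; apply hcontra; intro i hik
              have h1 := hcolC i; have h2 := hcol1 i
              rw [hC1il i hik] at h2
              rw [he] at h1; rw [hs] at h2; omega
            · exfalso; apply hcontra; intro i hik
              have h1 := hcolC i; have h2 := hcol1 i
              rw [hC1il i hik] at h2
              rw [he] at h1; rw [hs] at h2; omega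
            · intro i; have h2 := hcol1 i; rw [hs] at h2; rwa [he]
          have hC1fact : Cmat (mutate k B0) (k :: (u ++ [l]))
              = Cmat (mutate k B0) (k :: u)
                * (Jmat l + rowSel l (posPart (et • Bmat B0 u))) := by
            rw [hC1concat]; exact Cstep_factor _ _ l et het1 hcolC1
          have hG1fact : Gmat (mutate k B0) (k :: (u ++ [l]))
              = Gmat (mutate k B0) (k :: u)
                * (Jmat l + colSel l (posPart ((-et) • Bmat B0 u))) := by
            rw [hG1concat]; exact Gstep_factor _ _ _ _ l et het1 hcolC1 hH1'
          obtain ⟨σ2, hσ21, hcol2, -⟩ := sign_of_col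
            (Cmat (Bmat B0 (u ++ [l]))ᵀ (u ++ [l]).reverse) k
            (hsc _ ((hB0.bmat (u ++ [l])).transpose) (u ++ [l]).reverse k)
          have htrans : ∀ i, Cmat (Bmat B0 (u ++ [l]))ᵀ (u ++ [l]).reverse i k
              = Gmat B0 (u ++ [l]) k i := by
            intro i; rw [hanew, Matrix.transpose_apply]
          have hG'j0 : Gmat B0 (u ++ [l]) k j0 = Gmat B0 u k j0 := by
            rw [hGfact]; exact mul_L_apply_ne l _ _ k hj0l
          have hsgn' : ∀ j, 0 ≤ ε * Gmat B0 (u ++ [l]) k j := by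
            have hj0sgn := hsgnG j0
            rcases hε1 with he | he <;> rcases hσ21 with hs | hs
            · intro j; have h2 := hcol2 j; rw [htrans j, hs] at h2; rwa [he]
            · exfalso
              have h2 := hcol2 j0; rw [htrans j0, hG'j0, hs] at h2
              rw [he] at hj0sgn; omega
            · exfalso
              have h2 := hcol2 j0; rw [htrans j0, hG'j0, hs] at h2
              rw [he] at hj0sgn; omega
            · intro j; have h2 := hcol2 j; rw [htrans j, hs] at h2; rwa [he]
          refine ⟨ε, hε1, hsgn', ⟨j0, by rw [hG'j0]; exact hj0⟩, ?_, ?_⟩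
          · rw [hC1fact, hC1, hCfact, Matrix.mul_assoc]
          · rw [hG1fact, hG1, hGfact, Matrix.mul_assoc]


end Master
/-- **Dual mutation formulas** for the `C`- and `G`-matrices upon changing the
initial vertex from `t₀` to the adjacent vertex `t₁` (initial matrix `μ_k(B⁰)`). -/
theorem dual_mutation (n : ℕ) (hn : 1 ≤ n)
    (hsc : ∀ B : Matrix (Fin n) (Fin n) ℤ, IsSkewSymmetrizable B →
      ∀ w : List (Fin n), ColSignCoherent (Cmat B w))
    (B0 : Matrix (Fin n) (Fin n) ℤ) (hB0 : IsSkewSymmetrizable B0)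
    (k : Fin n) (w : List (Fin n)) (ε : ℤ)
    (hε : (ε = 1 ∧ ∀ j, 0 ≤ Gmat B0 w k j) ∨ (ε = -1 ∧ ∀ j, Gmat B0 w k j ≤ 0)) :
    Cmat (mutate k B0) (k :: w) = (Jmat k + rowSel k (posPart ((-ε) • B0))) * Cmat B0 w ∧
    Gmat (mutate k B0) (k :: w) = (Jmat k + colSel k (posPart (ε • B0))) * Gmat B0 w := by
  obtain ⟨ε', hε'1, hsgn, hnz, hC, hG⟩ := (master hsc w.length B0 hB0 w rfl).2 k
  obtain ⟨j0, hj0⟩ := hnz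
  have hεε : ε = ε' := by
    rcases hε with ⟨he, hpos⟩ | ⟨he, hneg⟩ <;> rcases hε'1 with he' | he' <;> rw [he, he']
    · exfalso
      have h1 := hpos j0
      have h2 := hsgn j0
      rw [he'] at h2
      omega
    · exfalso
      have h1 := hneg j0
      have h2 := hsgn j0
      rw [he'] at h2
      omega
  rw [hεε]
  exact ⟨hC, hG⟩

end ClusterPattern
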